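/- The function g(τ_c) = (τ - Nτ_c)·(A·p_d·[M - βσ²(N-1)/(βNp_cτ_c + σ²(K+1))] + B) - Nτ_c·p_c is strictly concave in τ_c on (0, τ/N): its second derivative equals -2A·p_d·p_c·σ²β²(βp_cτ + σ²(K+1))·N²(N-1)/(βNp_cτ_c + σ²(K+1))³ < 0. -/

import Mathlib

noncomputable def gFun (A B pd pc β σ2 τ K M : ℝ) (N : ℕ) : ℝ → ℝ :=
  fun x => (τ - N * x) * (A * pd * (M
    - β * σ2 * (N - 1) / (β * N * pc * x + σ2 * (K + 1))) + B) - N * x * pc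

noncomputable def g1Fun (A _B pd pc β σ2 τ K M : ℝ) (N : ℕ) : ℝ → ℝ :=
  fun x => -(N : ℝ) * (A * pd * (M
      - β * σ2 * (N - 1) / (β * N * pc * x + σ2 * (K + 1))) + _B)
    + (τ - N * x) * (A * pd * (β * σ2 * ((N : ℝ) - 1) * (β * N * pc))
        / (β * N * pc * x + σ2 * (K + 1)) ^ 2)
    - N * pc

noncomputable def g2Fun (A _B pd pc β σ2 τ K _M : ℝ) (N : ℕ) : ℝ → ℝ :=
  fun x => -(2 * A * pd * pc * σ2 * β ^ 2 * (β * pc * τ + σ2 * (K + 1)) * (N : ℝ) ^ 2 * ((N : ℝ) - 1))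
            / (β * N * pc * x + σ2 * (K + 1)) ^ 3

lemma den_pos {pc β σ2 K : ℝ} (N : ℕ) (hpc : 0 < pc) (hβ : 0 < β) (hσ : 0 < σ2)
    (hK : 0 ≤ K) (hN : 2 ≤ N) {x : ℝ} (hx : 0 < x) :
    0 < β * N * pc * x + σ2 * (K + 1) := by
  have hN0 : (0:ℝ) < N := by positivity
  positivity

lemma hasDerivAt_gFun (A B pd pc β σ2 τ K M : ℝ) (N : ℕ)
    (hpc : 0 < pc) (hβ : 0 < β) (hσ : 0 < σ2) (hK : 0 ≤ K) (hN : 2 ≤ N)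
    {x : ℝ} (hx : 0 < x) :
    HasDerivAt (gFun A B pd pc β σ2 τ K M N) (g1Fun A B pd pc β σ2 τ K M N x) x := by
  have hne : β * N * pc * x + σ2 * (K + 1) ≠ 0 := (den_pos N hpc hβ hσ hK hN hx).ne'
  have hab : HasDerivAt (fun y : ℝ => β * N * pc * y + σ2 * (K + 1)) (β * N * pc * 1) x :=
    ((hasDerivAt_id x).const_mul (β * N * pc)).add_const (σ2 * (K + 1))
  have hf := (hasDerivAt_const x (β * σ2 * ((N:ℝ) - 1))).div hab hne
  have hlin : HasDerivAt (fun y : ℝ => τ - (N:ℝ) * y) (0 - (N:ℝ) * 1) x :=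
    (hasDerivAt_const x τ).sub ((hasDerivAt_id x).const_mul (N:ℝ))
  have hinner := (((hasDerivAt_const x M).sub hf).const_mul (A * pd)).add_const B
  have H := (hlin.mul hinner).sub (((hasDerivAt_id x).const_mul (N:ℝ)).mul_const pc)
  refine H.congr_deriv ?_
  symm
  simp only [g1Fun, Pi.sub_apply, Pi.div_apply, Pi.pow_apply]
  field_simp
  ring

lemma hasDerivAt_g1Fun (A B pd pc β σ2 τ K M : ℝ) (N : ℕ)
    (hpc : 0 < pc) (hβ : 0 < β) (hσ : 0 < σ2) (hK : 0 ≤ K) (hN : 2 ≤ N)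
    {x : ℝ} (hx : 0 < x) :
    HasDerivAt (g1Fun A B pd pc β σ2 τ K M N) (g2Fun A B pd pc β σ2 τ K M N x) x := by
  have hne : β * N * pc * x + σ2 * (K + 1) ≠ 0 := (den_pos N hpc hβ hσ hK hN hx).ne'
  have hne2 : (β * N * pc * x + σ2 * (K + 1)) ^ 2 ≠ 0 := pow_ne_zero _ hne
  have hab : HasDerivAt (fun y : ℝ => β * N * pc * y + σ2 * (K + 1)) (β * N * pc * 1) x :=
    ((hasDerivAt_id x).const_mul (β * N * pc)).add_const (σ2 * (K + 1))
  have hf := (hasDerivAt_const x (β * σ2 * ((N:ℝ) - 1))).div hab hne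
  have hpow := hab.pow 2
  have hdiv2 := (hasDerivAt_const x (A * pd * (β * σ2 * ((N:ℝ) - 1) * (β * N * pc)))).div hpow hne2
  have hlin : HasDerivAt (fun y : ℝ => τ - (N:ℝ) * y) (0 - (N:ℝ) * 1) x :=
    (hasDerivAt_const x τ).sub ((hasDerivAt_id x).const_mul (N:ℝ))
  have h1 := ((((hasDerivAt_const x M).sub hf).const_mul (A * pd)).add_const B).const_mul (-(N:ℝ))
  have H := ((h1.add (hlin.mul hdiv2)).sub_const ((N:ℝ) * pc))
  refine H.congr_deriv ?_
  symm
  simp only [g2Fun, Pi.sub_apply, Pi.div_apply, Pi.pow_apply]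
  field_simp
  ring

theorem stored_energy_concave_in_time (A B pd pc β σ2 τ K M : ℝ) (N : ℕ)
    (hA : 0 < A) (hpd : 0 < pd) (hpc : 0 < pc) (hβ : 0 < β) (hσ : 0 < σ2)
    (hτ : 0 < τ) (hK : 0 ≤ K) (hN : 2 ≤ N) :
    StrictConcaveOn ℝ (Set.Ioo 0 (τ / N))
      (fun τc : ℝ => (τ - N * τc) * (A * pd * (M
        - β * σ2 * (N - 1) / (β * N * pc * τc + σ2 * (K + 1))) + B) - N * τc * pc)
    ∧ ∀ τc : ℝ, τc ∈ Set.Ioo 0 (τ / N) →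
      deriv (deriv (fun τc : ℝ => (τ - N * τc) * (A * pd * (M
        - β * σ2 * (N - 1) / (β * N * pc * τc + σ2 * (K + 1))) + B) - N * τc * pc)) τc
        = -(2 * A * pd * pc * σ2 * β ^ 2 * (β * pc * τ + σ2 * (K + 1)) * N ^ 2 * (N - 1))
            / (β * N * pc * τc + σ2 * (K + 1)) ^ 3
      ∧ -(2 * A * pd * pc * σ2 * β ^ 2 * (β * pc * τ + σ2 * (K + 1)) * N ^ 2 * (N - 1))
            / (β * N * pc * τc + σ2 * (K + 1)) ^ 3 < 0 := by
  have hN1 : (1:ℝ) < (N:ℝ) := by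
    have : (2:ℝ) ≤ (N:ℝ) := by exact_mod_cast hN
    linarith
  -- deriv g = g1 on Ioi 0
  have hderiv1 : ∀ y ∈ Set.Ioi (0:ℝ),
      deriv (gFun A B pd pc β σ2 τ K M N) y = g1Fun A B pd pc β σ2 τ K M N y :=
    fun y hy => (hasDerivAt_gFun A B pd pc β σ2 τ K M N hpc hβ hσ hK hN hy).deriv
  have hderiv2 : ∀ x : ℝ, 0 < x →
      deriv (deriv (gFun A B pd pc β σ2 τ K M N)) x = g2Fun A B pd pc β σ2 τ K M N x := by
    intro x hx
    have hEq : deriv (gFun A B pd pc β σ2 τ K M N) =ᶠ[nhds x] g1Fun A B pd pc β σ2 τ K M N :=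
      Filter.eventuallyEq_of_mem (isOpen_Ioi.mem_nhds hx) hderiv1
    rw [hEq.deriv_eq]
    exact (hasDerivAt_g1Fun A B pd pc β σ2 τ K M N hpc hβ hσ hK hN hx).deriv
  have hneg : ∀ x : ℝ, 0 < x → g2Fun A B pd pc β σ2 τ K M N x < 0 := by
    intro x hx
    have hd := den_pos N hpc hβ hσ hK hN hx
    have hnum : 0 < 2 * A * pd * pc * σ2 * β ^ 2 * (β * pc * τ + σ2 * (K + 1)) * (N:ℝ) ^ 2 * ((N:ℝ) - 1) := by
      have h1 : 0 < 2 * A * pd * pc * σ2 * β ^ 2 * (β * pc * τ + σ2 * (K + 1)) * (N:ℝ) ^ 2 := by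
        have : (0:ℝ) < (N:ℝ) := by linarith
        positivity
      exact mul_pos h1 (by linarith)
    exact div_neg_of_neg_of_pos (neg_neg_of_pos hnum) (by positivity)
  constructor
  · apply strictConcaveOn_of_deriv2_neg (convex_Ioo _ _)
    · intro x hx
      exact (hasDerivAt_gFun A B pd pc β σ2 τ K M N hpc hβ hσ hK hN hx.1).continuousAt.continuousWithinAt
    · intro x hx
      rw [interior_Ioo] at hx
      show deriv (deriv (gFun A B pd pc β σ2 τ K M N)) x < 0
      rw [hderiv2 x hx.1]
      exact hneg x hx.1
  · intro τc hτc
    exact ⟨hderiv2 τc hτc.1, hneg τc hτc.1⟩
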